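/- Let θ ~ Exp(α) be independent of a standard Brownian motion w, κ = a - σ²/2 with β = 2a/σ² - 1 > 0, and M = exp(-σ w_θ - κ θ). Then E[M^β log M] = β σ² / (2α). -/

import Mathlib

open MeasureTheory ProbabilityTheory Real
open scoped ENNReal NNReal

lemma integral_wd (g : ℝ → ℝ) (hg : Measurable g) (hg0 : ∀ x, 0 ≤ g x) (f : ℝ → ℝ) :
    ∫ x, f x ∂(volume.withDensity (fun x => ENNReal.ofReal (g x))) = ∫ x, g x * f x := by
  have h : (fun x => ENNReal.ofReal (g x)) = fun x => ((g x).toNNReal : ℝ≥0∞) := rfl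
  rw [h, integral_withDensity_eq_integral_smul hg.real_toNNReal f]
  congr 1; ext x
  simp [NNReal.smul_def, Real.coe_toNNReal _ (hg0 x)]

lemma integrable_wd (g : ℝ → ℝ) (hg : Measurable g) (hg0 : ∀ x, 0 ≤ g x) (f : ℝ → ℝ) :
    Integrable f (volume.withDensity (fun x => ENNReal.ofReal (g x))) ↔
      Integrable (fun x => g x * f x) volume := by
  have h : (fun x => ENNReal.ofReal (g x)) = fun x => ((g x).toNNReal : ℝ≥0∞) := rfl
  rw [h, integrable_withDensity_iff_integrable_smul hg.real_toNNReal]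
  apply integrable_congr
  filter_upwards with x
  simp [NNReal.smul_def, Real.coe_toNNReal _ (hg0 x)]

lemma integral_gauss (f : ℝ → ℝ) :
    ∫ x, f x ∂(gaussianReal 0 1) = ∫ x, gaussianPDFReal 0 1 x * f x := by
  rw [gaussianReal_of_var_ne_zero 0 one_ne_zero]
  exact integral_wd _ (measurable_gaussianPDFReal 0 1) (gaussianPDFReal_nonneg 0 1) f

lemma integrable_gauss (f : ℝ → ℝ) :
    Integrable f (gaussianReal 0 1) ↔ Integrable (fun x => gaussianPDFReal 0 1 x * f x) volume := by
  rw [gaussianReal_of_var_ne_zero 0 one_ne_zero]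
  exact integrable_wd _ (measurable_gaussianPDFReal 0 1) (gaussianPDFReal_nonneg 0 1) f

lemma phi_shift (c x : ℝ) :
    Real.exp (c*x) * gaussianPDFReal 0 1 x = Real.exp (c^2/2) * gaussianPDFReal 0 1 (x - c) := by
  simp only [gaussianPDFReal_def]
  rw [mul_left_comm, mul_left_comm (Real.exp (c^2/2)), ← Real.exp_add, ← Real.exp_add]
  congr 2
  push_cast
  ring

lemma phi_eq (x : ℝ) : gaussianPDFReal 0 1 x = (Real.sqrt (2*π))⁻¹ * Real.exp (-(1/2) * x^2) := by
  rw [gaussianPDFReal_def]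
  push_cast
  norm_num
  left
  ring_nf

lemma integrable_id_phi : Integrable (fun x => x * gaussianPDFReal 0 1 x) := by
  have h := (integrable_mul_exp_neg_mul_sq (b := 1/2) (by norm_num)).const_mul
    ((Real.sqrt (2*π))⁻¹)
  apply h.congr
  filter_upwards with x
  rw [phi_eq]
  ring

lemma phi_even (x : ℝ) : gaussianPDFReal 0 1 (-x) = gaussianPDFReal 0 1 x := by
  rw [phi_eq, phi_eq]; ring_nf

lemma integral_id_phi : ∫ x, x * gaussianPDFReal 0 1 x = 0 := by
  have h := MeasureTheory.integral_neg_eq_self (fun x => x * gaussianPDFReal 0 1 x) volume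
  simp only [phi_even, neg_mul] at h
  rw [integral_neg] at h
  linarith

lemma gauss_lin (a b c : ℝ) :
    ∫ x, (a*x + b) * Real.exp (c*x) ∂(gaussianReal 0 1) = (a*c+b) * Real.exp (c^2/2) := by
  rw [integral_gauss]
  have key : ∀ x, gaussianPDFReal 0 1 x * ((a*x+b) * Real.exp (c*x))
      = Real.exp (c^2/2) * ((fun y => (a*(y+c)+b) * gaussianPDFReal 0 1 y) (x - c)) := by
    intro x
    have h := phi_shift c x
    simp only [sub_add_cancel]
    have h2 : gaussianPDFReal 0 1 x * ((a*x+b) * Real.exp (c*x))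
        = (a*x+b) * (Real.exp (c*x) * gaussianPDFReal 0 1 x) := by ring
    rw [h2, h]
    ring
  simp_rw [key]
  rw [integral_const_mul, MeasureTheory.integral_sub_right_eq_self
    (fun y => (a*(y+c)+b) * gaussianPDFReal 0 1 y) c]
  have expand : ∀ y:ℝ, (a*(y+c)+b) * gaussianPDFReal 0 1 y
      = a*(y * gaussianPDFReal 0 1 y) + (a*c+b) * gaussianPDFReal 0 1 y := fun y => by ring
  simp_rw [expand]
  rw [integral_add (integrable_id_phi.const_mul a)
    ((integrable_gaussianPDFReal 0 1).const_mul (a*c+b)), integral_const_mul, integral_const_mul,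
    integral_id_phi, integral_gaussianPDFReal_eq_one 0 one_ne_zero]
  ring

lemma gauss_lin_integrable (a b c : ℝ) :
    Integrable (fun x => (a*x+b) * Real.exp (c*x)) (gaussianReal 0 1) := by
  rw [integrable_gauss]
  have key : ∀ x, gaussianPDFReal 0 1 x * ((a*x+b) * Real.exp (c*x))
      = Real.exp (c^2/2) * ((fun y => (a*(y+c)+b) * gaussianPDFReal 0 1 y) (x - c)) := by
    intro x
    have h := phi_shift c x
    simp only [sub_add_cancel]
    have h2 : gaussianPDFReal 0 1 x * ((a*x+b) * Real.exp (c*x))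
        = (a*x+b) * (Real.exp (c*x) * gaussianPDFReal 0 1 x) := by ring
    rw [h2, h]
    ring
  simp_rw [key]
  apply Integrable.const_mul
  apply Integrable.comp_sub_right (f := fun y => (a*(y+c)+b) * gaussianPDFReal 0 1 y) _ c
  have expand : ∀ y:ℝ, (a*(y+c)+b) * gaussianPDFReal 0 1 y
      = a*(y * gaussianPDFReal 0 1 y) + (a*c+b) * gaussianPDFReal 0 1 y := fun y => by ring
  simp_rw [expand]
  exact (integrable_id_phi.const_mul a).add ((integrable_gaussianPDFReal 0 1).const_mul (a*c+b))

lemma expM_eq (α : ℝ) :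
    expMeasure α = volume.withDensity (fun x => ENNReal.ofReal (exponentialPDFReal α x)) := rfl

lemma integral_expM {α : ℝ} (hα : 0 < α) (f : ℝ → ℝ) :
    ∫ x, f x ∂(expMeasure α) = ∫ x, exponentialPDFReal α x * f x := by
  rw [expM_eq]
  exact integral_wd _ (measurable_exponentialPDFReal α) (exponentialPDFReal_nonneg hα) f

lemma integrable_expM {α : ℝ} (hα : 0 < α) (f : ℝ → ℝ) :
    Integrable f (expMeasure α) ↔
      Integrable (fun x => exponentialPDFReal α x * f x) volume := by
  rw [expM_eq]
  exact integrable_wd _ (measurable_exponentialPDFReal α) (exponentialPDFReal_nonneg hα) f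

lemma expPDFReal_eq (α x : ℝ) :
    exponentialPDFReal α x = if 0 ≤ x then α * Real.exp (-(α * x)) else 0 := by
  rw [exponentialPDFReal, gammaPDFReal]
  simp only [rpow_one, Real.Gamma_one, div_one, sub_self, rpow_zero, mul_one]

lemma expM_ae_nonneg {α : ℝ} (hα : 0 < α) : ∀ᵐ t ∂(expMeasure α), 0 ≤ t := by
  rw [ae_iff]
  have h : {t : ℝ | ¬ 0 ≤ t} = Set.Iio 0 := by ext t; simp
  rw [h, expM_eq, withDensity_apply _ measurableSet_Iio]
  exact lintegral_exponentialPDF_of_nonpos le_rfl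

lemma expM_mean {α : ℝ} (hα : 0 < α) : ∫ t, t ∂(expMeasure α) = α⁻¹ := by
  rw [integral_expM hα]
  have h : ∀ x : ℝ, exponentialPDFReal α x * x
      = Set.indicator (Set.Ioi 0) (fun x => α * (x ^ ((2:ℝ)-1) * Real.exp (-(α*x)))) x := by
    intro x
    rw [expPDFReal_eq]
    rcases lt_trichotomy x 0 with h | h | h
    · rw [if_neg (not_le.mpr h), Set.indicator_of_notMem (by simp [h.le, not_lt.mpr h.le])]
      ring
    · subst h; simp
    · rw [if_pos h.le, Set.indicator_of_mem (Set.mem_Ioi.mpr h)]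
      norm_num
      ring
  simp_rw [h]
  rw [MeasureTheory.integral_indicator measurableSet_Ioi, MeasureTheory.integral_const_mul,
    integral_rpow_mul_exp_neg_mul_Ioi (by norm_num) hα, Real.Gamma_two]
  field_simp
  ring_nf; simp only [Real.rpow_two]; rw [← mul_pow, mul_inv_cancel₀ hα.ne', one_pow]

lemma abs_le_exp (x : ℝ) : |x| ≤ Real.exp x + Real.exp (-x) := by
  rcases le_total 0 x with h | h
  · rw [abs_of_nonneg h]
    nlinarith [Real.add_one_le_exp x, Real.exp_pos (-x)]
  · rw [abs_of_nonpos h]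
    nlinarith [Real.add_one_le_exp (-x), Real.exp_pos x]

lemma abs_mul_exp_le (c x : ℝ) :
    |x| * Real.exp (c*x) ≤ Real.exp ((c+1)*x) + Real.exp ((c-1)*x) := by
  have h := mul_le_mul_of_nonneg_right (abs_le_exp x) (Real.exp_pos (c*x)).le
  calc |x| * Real.exp (c*x) ≤ (Real.exp x + Real.exp (-x)) * Real.exp (c*x) := h
    _ = Real.exp ((c+1)*x) + Real.exp ((c-1)*x) := by
        rw [add_mul, ← Real.exp_add, ← Real.exp_add]
        ring_nf

lemma t_exp_int {c : ℝ} (hc : 0 < c) :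
    IntegrableOn (fun t => t * Real.exp (-(c*t))) (Set.Ioi 0) := by
  apply Integrable.mono' (((exp_neg_integrableOn_Ioi 0 (half_pos hc)).const_mul (2/c)))
  · exact ((continuous_id.mul ((continuous_const.mul continuous_id).neg.rexp)).aestronglyMeasurable).restrict
  · filter_upwards [ae_restrict_mem measurableSet_Ioi] with t ht
    have ht : (0:ℝ) < t := ht
    have h1 : t ≤ 2/c * Real.exp (c/2 * t) := by
      have h2 : c/2 * t ≤ Real.exp (c/2 * t) := by
        nlinarith [Real.add_one_le_exp (c/2 * t), Real.exp_pos (c/2*t)]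
      rw [div_mul_eq_mul_div, le_div_iff₀ hc]
      nlinarith
    have hnorm : ‖t * Real.exp (-(c*t))‖ = t * Real.exp (-(c*t)) := by
      rw [Real.norm_eq_abs, abs_of_nonneg (by positivity)]
    rw [hnorm]
    calc t * Real.exp (-(c*t)) ≤ 2/c * Real.exp (c/2 * t) * Real.exp (-(c*t)) := by
          exact mul_le_mul_of_nonneg_right h1 (Real.exp_pos _).le
      _ = 2/c * Real.exp (-(c/2) * t) := by rw [mul_assoc, ← Real.exp_add]; ring_nf

lemma exp_int_Ioi {c : ℝ} (hc : 0 < c) :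
    IntegrableOn (fun t => Real.exp (-(c*t))) (Set.Ioi 0) := by
  have := exp_neg_integrableOn_Ioi 0 hc
  apply this.congr
  filter_upwards with t
  ring_nf

lemma int_expM_id {α : ℝ} (hα : 0 < α) : Integrable (fun t : ℝ => t) (expMeasure α) := by
  rw [integrable_expM hα]
  have h : (fun x => exponentialPDFReal α x * x)
      = Set.indicator (Set.Ici 0) (fun x => α * Real.exp (-(α*x)) * x) := by
    funext x
    rw [expPDFReal_eq]
    by_cases hx : 0 ≤ x
    · rw [if_pos hx]; simp [Set.indicator_apply, hx]
    · rw [if_neg hx]; simp [Set.indicator_apply, hx]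
  rw [h, integrable_indicator_iff measurableSet_Ici, integrableOn_Ici_iff_integrableOn_Ioi]
  apply ((t_exp_int hα).const_mul α).congr
  filter_upwards with t
  ring

lemma int_expM_sqrt_exp {α b : ℝ} (hα : 0 < α) (hb : 0 < b) :
    Integrable (fun t => Real.sqrt t * Real.exp (b * Real.sqrt t)) (expMeasure α) := by
  rw [integrable_expM hα]
  have h : (fun x => exponentialPDFReal α x * (Real.sqrt x * Real.exp (b * Real.sqrt x)))
      = Set.indicator (Set.Ici 0)
        (fun x => α * Real.exp (-(α*x)) * (Real.sqrt x * Real.exp (b * Real.sqrt x))) := by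
    funext x
    rw [expPDFReal_eq]
    by_cases hx : 0 ≤ x
    · rw [if_pos hx]; simp [Set.indicator_apply, hx]
    · rw [if_neg hx]; simp [Set.indicator_apply, hx]
  rw [h, integrable_indicator_iff measurableSet_Ici, integrableOn_Ici_iff_integrableOn_Ioi]
  have hint : IntegrableOn
      (fun t => α * Real.exp (b^2/α) * (Real.exp (-(3*α/4*t)) + t * Real.exp (-(3*α/4*t))))
      (Set.Ioi 0) := by
    exact (((exp_int_Ioi (by positivity)).add (t_exp_int (by positivity))).const_mul _)
  apply Integrable.mono' hint
  · apply Continuous.aestronglyMeasurable ?_ |>.restrict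
    fun_prop
  · filter_upwards [ae_restrict_mem measurableSet_Ioi] with t ht
    have ht : (0:ℝ) < t := ht
    have hs := Real.sqrt_nonneg t
    have hsq : Real.sqrt t ^ 2 = t := Real.sq_sqrt ht.le
    have h1 : Real.sqrt t ≤ 1 + t := by nlinarith
    have h2 : b * Real.sqrt t ≤ b^2/α + α/4 * t := by
      rw [← sub_nonneg]
      have e1 : α*(b^2/α + α/4 * t - b * Real.sqrt t) = (α * Real.sqrt t / 2 - b)^2 := by
        have h4 : α^3 * (Real.sqrt t^2) = α^3 * t := by rw [hsq]
        field_simp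
        nlinarith [h4]
      have h3 : 0 ≤ α * (b^2/α + α/4 * t - b * Real.sqrt t) := e1 ▸ sq_nonneg _
      nlinarith
    have hnorm : ‖α * Real.exp (-(α*t)) * (Real.sqrt t * Real.exp (b * Real.sqrt t))‖
        = α * Real.exp (-(α*t)) * (Real.sqrt t * Real.exp (b * Real.sqrt t)) := by
      rw [Real.norm_eq_abs, abs_of_nonneg (by positivity)]
    rw [hnorm]
    calc α * Real.exp (-(α*t)) * (Real.sqrt t * Real.exp (b * Real.sqrt t))
        ≤ α * Real.exp (-(α*t)) * ((1+t) * Real.exp (b^2/α + α/4 * t)) := by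
          apply mul_le_mul_of_nonneg_left _ (by positivity)
          exact mul_le_mul h1 (Real.exp_le_exp.mpr h2) (Real.exp_pos _).le (by linarith)
      _ = α * (Real.exp (-(α*t)) * Real.exp (b^2/α + α/4*t)) * (1+t) := by ring
      _ = α * Real.exp (b^2/α) * (Real.exp (-(3*α/4*t)) + t * Real.exp (-(3*α/4*t))) := by
          rw [show Real.exp (-(α*t)) * Real.exp (b^2/α + α/4*t)
              = Real.exp (b^2/α) * Real.exp (-(3*α/4*t)) by
            rw [← Real.exp_add, ← Real.exp_add]; ring_nf]
          ring


set_option maxHeartbeats 1000000 in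
/-- Let `θ ~ Exp(α)` be independent of a standard Brownian motion `w`, and
`M = exp(-σ w_θ - κ θ)`.  Conditionally on `θ`, `w_θ` is `N(0, θ)`, so we represent
`w_θ = √θ · N` with `N` standard normal independent of `θ`.  With `κ = a - σ²/2`,
`β = 2(κ + σ²/2)/σ² - 1 > 0`, one has
`E[M^β log M] = β σ² / (2α)`. -/
theorem stmt_4 {Ω : Type*} [MeasurableSpace Ω] (μ : Measure Ω) [IsProbabilityMeasure μ]
    (θ N : Ω → ℝ) (hθmeas : Measurable θ) (hNmeas : Measurable N)
    {α : ℝ} (hα : 0 < α) (hθlaw : Measure.map θ μ = expMeasure α)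
    (hNlaw : Measure.map N μ = gaussianReal 0 1)
    (hindep : IndepFun θ N μ)
    {σ κ β : ℝ} (hσ : 0 < σ)
    (hβdef : β = 2 * (κ + σ ^ 2 / 2) / σ ^ 2 - 1) (hβ : 0 < β)
    (M : Ω → ℝ)
    (hM : ∀ ω, M ω = Real.exp (-σ * Real.sqrt (θ ω) * N ω - κ * θ ω)) :
    ∫ ω, M ω ^ β * Real.log (M ω) ∂μ = β * σ ^ 2 / (2 * α) := by
  haveI := isProbabilityMeasure_expMeasure hα
  have hσ2 : (0:ℝ) < σ^2 := by positivity
  have hκ : κ = β * σ^2 / 2 := by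
    field_simp at hβdef
    linarith
  have hκpos : 0 < κ := by rw [hκ]; positivity
  set G : ℝ × ℝ → ℝ := fun p =>
    Real.exp ((-σ * Real.sqrt p.1 * p.2 - κ * p.1) * β) * (-σ * Real.sqrt p.1 * p.2 - κ * p.1)
    with hGdef
  have hGcont : Continuous G := by fun_prop
  have hGsm : StronglyMeasurable G := hGcont.stronglyMeasurable
  have hstep1 : ∀ ω, M ω ^ β * Real.log (M ω) = G (θ ω, N ω) := by
    intro ω
    rw [hM ω, Real.rpow_def_of_pos (Real.exp_pos _), Real.log_exp]
  simp_rw [hstep1]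
  have hmap : Measure.map (fun ω => (θ ω, N ω)) μ
      = (expMeasure α).prod (gaussianReal 0 1) := by
    rw [← hθlaw, ← hNlaw]
    exact (indepFun_iff_map_prod_eq_prod_map_map hθmeas.aemeasurable
      hNmeas.aemeasurable).mp hindep
  have hpair : AEMeasurable (fun ω => (θ ω, N ω)) μ := (hθmeas.prodMk hNmeas).aemeasurable
  rw [show (∫ ω, G (θ ω, N ω) ∂μ) = ∫ p, G p ∂((expMeasure α).prod (gaussianReal 0 1)) by
    rw [← hmap, integral_map hpair hGsm.aestronglyMeasurable]]
  -- pointwise rewriting of G slices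
  have hGslice : ∀ t n : ℝ, G (t, n) = Real.exp ((-κ*t)*β) *
      ((-σ * Real.sqrt t * n + -κ*t) * Real.exp ((-σ * Real.sqrt t * β) * n)) := by
    intro t n
    show Real.exp ((-σ * Real.sqrt t * n - κ * t) * β) * (-σ * Real.sqrt t * n - κ * t) = _
    rw [show (-σ * Real.sqrt t * n - κ * t) * β
        = (-κ*t)*β + (-σ * Real.sqrt t * β) * n by ring, Real.exp_add]
    ring
  have hinner_int : ∀ t : ℝ, Integrable (fun n => G (t, n)) (gaussianReal 0 1) := by
    intro t
    have h := (gauss_lin_integrable (-σ * Real.sqrt t) (-κ*t)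
      ((-σ * Real.sqrt t) * β)).const_mul (Real.exp ((-κ*t) * β))
    apply h.congr
    filter_upwards with n
    rw [hGslice t n]
  -- bound on the norm integral
  have key_bound : ∀ t : ℝ, 0 ≤ t → (∫ n, ‖G (t, n)‖ ∂(gaussianReal 0 1))
      ≤ 2*Real.exp ((1:ℝ)/2) * σ * (Real.sqrt t * Real.exp (σ*β*Real.sqrt t)) + κ*t := by
    intro t ht
    have hs0 : 0 ≤ Real.sqrt t := Real.sqrt_nonneg t
    have hsq : Real.sqrt t^2 = t := Real.sq_sqrt ht
    set s := Real.sqrt t with hs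
    set c : ℝ := -σ*s*β with hc
    have hint1 := gauss_lin_integrable 0 1 (c+1)
    have hint2 := gauss_lin_integrable 0 1 (c-1)
    have hint3 := gauss_lin_integrable 0 1 c
    have hintH : Integrable (fun n => Real.exp ((-κ*t)*β) *
        (σ*s * ((0*n+1)*Real.exp ((c+1)*n)) + (σ*s * ((0*n+1)*Real.exp ((c-1)*n))
          + κ*t * ((0*n+1)*Real.exp (c*n))))) (gaussianReal 0 1) :=
      (((hint1.const_mul (σ*s)).add
        ((hint2.const_mul (σ*s)).add (hint3.const_mul (κ*t)))).const_mul _)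
    have hbd : ∀ n : ℝ, ‖G (t, n)‖ ≤ Real.exp ((-κ*t)*β) *
        (σ*s * ((0*n+1)*Real.exp ((c+1)*n)) + (σ*s * ((0*n+1)*Real.exp ((c-1)*n))
          + κ*t * ((0*n+1)*Real.exp (c*n)))) := by
      intro n
      rw [hGslice t n, norm_mul, norm_mul, Real.norm_eq_abs, Real.norm_eq_abs,
        Real.norm_eq_abs, Real.abs_exp, Real.abs_exp]
      have habs : |(-σ * s * n + -κ*t)| ≤ σ*s*|n| + κ*t := by
        calc |(-σ * s * n + -κ*t)| ≤ |(-σ * s * n)| + |(-κ*t)| := abs_add_le _ _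
          _ = σ*s*|n| + κ*t := by
            rw [abs_mul, abs_mul, abs_mul, abs_neg, abs_neg, abs_of_nonneg hσ.le,
              abs_of_nonneg hs0, abs_of_nonneg hκpos.le, abs_of_nonneg ht]
      have hcn : (-σ * s * β) * n = c * n := by rw [hc]
      rw [hcn]
      have hmain : |(-σ * s * n + -κ*t)| * Real.exp (c*n)
          ≤ σ*s * ((0*n+1)*Real.exp ((c+1)*n)) + (σ*s * ((0*n+1)*Real.exp ((c-1)*n))
            + κ*t * ((0*n+1)*Real.exp (c*n))) := by
        have h1 : |(-σ * s * n + -κ*t)| * Real.exp (c*n)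
            ≤ (σ*s*|n| + κ*t) * Real.exp (c*n) :=
          mul_le_mul_of_nonneg_right habs (Real.exp_pos _).le
        have h2 : |n| * Real.exp (c*n) ≤ Real.exp ((c+1)*n) + Real.exp ((c-1)*n) :=
          abs_mul_exp_le c n
        have hss : 0 ≤ σ*s := by positivity
        nlinarith [Real.exp_pos (c*n), Real.exp_pos ((c+1)*n), Real.exp_pos ((c-1)*n),
          mul_le_mul_of_nonneg_left h2 hss]
      exact mul_le_mul_of_nonneg_left hmain (Real.exp_pos _).le
    calc (∫ n, ‖G (t, n)‖ ∂(gaussianReal 0 1))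
        ≤ ∫ n, Real.exp ((-κ*t)*β) * (σ*s * ((0*n+1)*Real.exp ((c+1)*n))
            + (σ*s * ((0*n+1)*Real.exp ((c-1)*n)) + κ*t * ((0*n+1)*Real.exp (c*n))))
            ∂(gaussianReal 0 1) :=
          integral_mono (hinner_int t).norm hintH (fun n => hbd n)
      _ = Real.exp ((-κ*t)*β) * (σ*s * ((0*(c+1)+1) * Real.exp ((c+1)^2/2))
          + (σ*s * ((0*(c-1)+1) * Real.exp ((c-1)^2/2)) + κ*t * ((0*c+1) * Real.exp (c^2/2)))) := by
          rw [integral_const_mul]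
          congr 1
          have hg23 : Integrable (fun n => σ*s * ((0*n+1)*Real.exp ((c-1)*n))
              + κ*t * ((0*n+1)*Real.exp (c*n))) (gaussianReal 0 1) :=
            (hint2.const_mul _).add (hint3.const_mul _)
          rw [integral_add (hint1.const_mul _) hg23,
            integral_add (hint2.const_mul _) (hint3.const_mul _),
            integral_const_mul, integral_const_mul, integral_const_mul,
            gauss_lin 0 1 (c+1), gauss_lin 0 1 (c-1), gauss_lin 0 1 c]
      _ ≤ 2*Real.exp ((1:ℝ)/2) * σ * (s * Real.exp (σ*β*s)) + κ*t := by
          have hc2 : c^2/2 = κ*t*β := by rw [hc, hκ, ← hsq]; ring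
          have e3 : Real.exp ((-κ*t)*β) * Real.exp (c^2/2) = 1 := by
            rw [← Real.exp_add, hc2]; norm_num
          have e1 : Real.exp ((-κ*t)*β) * Real.exp ((c+1)^2/2)
              = Real.exp (c + 1/2) := by
            rw [← Real.exp_add]; congr 1
            have : (c+1)^2/2 = c^2/2 + c + 1/2 := by ring
            rw [this, hc2]; ring
          have e2 : Real.exp ((-κ*t)*β) * Real.exp ((c-1)^2/2)
              = Real.exp (-c + 1/2) := by
            rw [← Real.exp_add]; congr 1
            have : (c-1)^2/2 = c^2/2 - c + 1/2 := by ring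
            rw [this, hc2]; ring
          have hcle : c ≤ σ*β*s := by
            rw [hc]; nlinarith
          have hcle2 : -c ≤ σ*β*s := by rw [hc]; ring_nf; nlinarith
          have hb1 : Real.exp (c + 1/2) ≤ Real.exp (σ*β*s) * Real.exp ((1:ℝ)/2) := by
            rw [← Real.exp_add]; exact Real.exp_le_exp.mpr (by linarith)
          have hb2 : Real.exp (-c + 1/2) ≤ Real.exp (σ*β*s) * Real.exp ((1:ℝ)/2) := by
            rw [← Real.exp_add]; exact Real.exp_le_exp.mpr (by linarith)
          have lhs_eq : Real.exp ((-κ*t)*β) * (σ*s * ((0*(c+1)+1) * Real.exp ((c+1)^2/2))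
              + (σ*s * ((0*(c-1)+1) * Real.exp ((c-1)^2/2)) + κ*t * ((0*c+1) * Real.exp (c^2/2))))
              = σ*s * (Real.exp ((-κ*t)*β) * Real.exp ((c+1)^2/2))
                + σ*s * (Real.exp ((-κ*t)*β) * Real.exp ((c-1)^2/2))
                + κ*t * (Real.exp ((-κ*t)*β) * Real.exp (c^2/2)) := by ring
          rw [lhs_eq, e1, e2, e3]
          have hss : 0 ≤ σ*s := by positivity
          nlinarith [mul_le_mul_of_nonneg_left hb1 hss, mul_le_mul_of_nonneg_left hb2 hss,
            Real.exp_pos (σ*β*s), Real.exp_pos ((1:ℝ)/2)]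
  -- integrability over the product
  have hGmes : AEStronglyMeasurable G ((expMeasure α).prod (gaussianReal 0 1)) :=
    hGsm.aestronglyMeasurable
  have hnormint : Integrable (fun t => ∫ n, ‖G (t, n)‖ ∂(gaussianReal 0 1)) (expMeasure α) := by
    have hD : Integrable (fun t => 2*Real.exp ((1:ℝ)/2) * σ *
        (Real.sqrt t * Real.exp (σ*β*Real.sqrt t)) + κ*t) (expMeasure α) :=
      ((int_expM_sqrt_exp hα (by positivity)).const_mul _).add ((int_expM_id hα).const_mul κ)
    apply Integrable.mono' hD (hGsm.norm.integral_prod_right').aestronglyMeasurable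
    filter_upwards [expM_ae_nonneg hα] with t ht
    rw [Real.norm_eq_abs, abs_of_nonneg (integral_nonneg (fun n => norm_nonneg _))]
    exact key_bound t ht
  have hGint : Integrable G ((expMeasure α).prod (gaussianReal 0 1)) :=
    (integrable_prod_iff hGmes).mpr ⟨Filter.Eventually.of_forall hinner_int, hnormint⟩
  rw [integral_prod G hGint]
  -- evaluate inner integral a.e.
  have hae : ∀ᵐ t ∂(expMeasure α),
      (∫ n, G (t, n) ∂(gaussianReal 0 1)) = β*σ^2/2 * t := by
    filter_upwards [expM_ae_nonneg hα] with t ht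
    have hsq : Real.sqrt t^2 = t := Real.sq_sqrt ht
    have heq : (∫ n, G (t, n) ∂(gaussianReal 0 1)) = Real.exp ((-κ*t)*β) *
        ∫ n, (-σ * Real.sqrt t * n + -κ*t) * Real.exp ((-σ * Real.sqrt t * β) * n)
          ∂(gaussianReal 0 1) := by
      rw [← integral_const_mul]
      exact integral_congr_ae (Filter.Eventually.of_forall (fun n => hGslice t n))
    rw [heq, gauss_lin]
    have hexp : Real.exp ((-κ*t)*β) * Real.exp ((-σ * Real.sqrt t * β)^2/2) = 1 := by
      rw [← Real.exp_add]
      have : (-κ*t)*β + (-σ * Real.sqrt t * β)^2/2 = 0 := by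
        rw [hκ]; linear_combination (σ^2*β^2/2) * hsq
      rw [this, Real.exp_zero]
    have hval : -σ * Real.sqrt t * (-σ * Real.sqrt t * β) + -κ*t = β*σ^2/2 * t := by
      rw [hκ]; linear_combination (σ^2*β) * hsq
    calc Real.exp ((-κ*t)*β) * ((-σ * Real.sqrt t * (-σ * Real.sqrt t * β) + -κ*t) *
          Real.exp ((-σ * Real.sqrt t * β)^2/2))
        = (-σ * Real.sqrt t * (-σ * Real.sqrt t * β) + -κ*t) *
          (Real.exp ((-κ*t)*β) * Real.exp ((-σ * Real.sqrt t * β)^2/2)) := by ring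
      _ = β*σ^2/2 * t := by rw [hexp, hval, mul_one]
  rw [integral_congr_ae hae, integral_const_mul, expM_mean hα]
  field_simp
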